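/- There exist constants C₂ > 0 and κ₀ ∈ (0,1] such that for all κ ∈ (0,κ₀] and all x ≤ 1 one has |g_κ(x) − g₀(x)| ≤ C₂ κ^δ. -/

import Mathlib

set_option maxHeartbeats 4000000


open Real MeasureTheory

private theorem aux_exp_nn (t : ℝ) : 0 ≤ Real.exp (-t) - 1 + t := by
  nlinarith [Real.add_one_le_exp (-t)]

private theorem aux_exp_quad (t : ℝ) (h : 0 ≤ t) : Real.exp (-t) - 1 + t ≤ t^2 := by
  have hu := Real.add_one_le_exp t
  have hv := Real.add_one_le_exp (-t)
  have hp := Real.exp_pos t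
  have h3 : Real.exp (-t) * Real.exp t = 1 := by
    rw [← Real.exp_add]; simp
  have h4 : Real.exp (-t) * (t+1) ≤ 1 := by
    calc Real.exp (-t) * (t+1) ≤ Real.exp (-t) * Real.exp t :=
          mul_le_mul_of_nonneg_left hu (Real.exp_pos (-t)).le
      _ = 1 := h3
  nlinarith [mul_nonneg h (show (0:ℝ) ≤ Real.exp (-t) - (1 - t) by linarith)]

private theorem aux_sqrt_add (u v : ℝ) (hv : 0 ≤ v) :
    Real.sqrt (u + v) ≤ Real.sqrt u + Real.sqrt v := by
  rcases le_or_gt u 0 with h | h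
  · calc Real.sqrt (u+v) ≤ Real.sqrt v := Real.sqrt_le_sqrt (by linarith)
      _ ≤ _ := by nlinarith [Real.sqrt_nonneg u]
  · have h1 : u + v ≤ (Real.sqrt u + Real.sqrt v)^2 := by
      have := Real.sq_sqrt h.le
      have := Real.sq_sqrt hv
      nlinarith [Real.sqrt_nonneg u, Real.sqrt_nonneg v,
        mul_nonneg (Real.sqrt_nonneg u) (Real.sqrt_nonneg v)]
    calc Real.sqrt (u+v) ≤ Real.sqrt ((Real.sqrt u + Real.sqrt v)^2) := Real.sqrt_le_sqrt h1
      _ = _ := Real.sqrt_sq (by positivity)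

private theorem aux_sqrt_diff (a b : ℝ) :
    |Real.sqrt a - Real.sqrt b| ≤ Real.sqrt |a - b| := by
  have key : ∀ p q : ℝ, Real.sqrt p - Real.sqrt q ≤ Real.sqrt |p - q| := by
    intro p q
    have h1 : p ≤ q + |p - q| := by cases abs_cases (p - q) <;> linarith [abs_nonneg (p-q)]
    have h2 : Real.sqrt p ≤ Real.sqrt q + Real.sqrt |p - q| :=
      le_trans (Real.sqrt_le_sqrt h1) (aux_sqrt_add q |p-q| (abs_nonneg _))
    linarith
  rcases abs_cases (Real.sqrt a - Real.sqrt b) with ⟨he, _⟩ | ⟨he, _⟩ <;> rw [he]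
  · exact key a b
  · rw [show |a - b| = |b - a| from abs_sub_comm a b]; linarith [key b a]

private theorem aux_exp4 : Real.exp 4 ≤ 55 := by
  have h1 : Real.exp 1 ≤ 2.7182818286 := Real.exp_one_lt_d9.le
  have h2 : Real.exp 4 = Real.exp 1 ^ (4:ℕ) := by
    rw [show (4:ℝ) = ((4:ℕ):ℝ) * (1:ℝ) by norm_num, Real.exp_nat_mul]
  rw [h2]
  calc Real.exp 1 ^ (4:ℕ) ≤ (2.7182818286:ℝ)^(4:ℕ) :=
        pow_le_pow_left₀ (Real.exp_pos 1).le h1 4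
    _ ≤ 55 := by norm_num

theorem stmt_12
    (Φ : ℝ → ℝ) (hΦmeas : Measurable Φ) (hΦnn : ∀ η, 0 ≤ Φ η)
    (hΦneg : ∀ η < (0:ℝ), Φ η = 0)
    (C k δ C' : ℝ) (hC : 0 < C) (hk0 : 0 < k) (hk1 : k < 3/2)
    (hδ0 : 0 < δ) (hδ1 : δ ≤ 1/2) (hC' : 0 < C')
    (hΦtaylor : ∀ η ∈ Set.Icc (0:ℝ) 1, |Φ η - C * η ^ k| ≤ C' * η ^ (k + δ))
    (F : ℝ → ℝ → ℝ) (G : ℝ → ℝ → ℝ → ℝ) (Φκ : ℝ → ℝ → ℝ) (Φ0 : ℝ → ℝ)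
    (hF : ∀ κ > (0:ℝ), ∀ x, F κ x = (Real.exp (-(κ*x)) - 1 + κ*x) / κ^2)
    (hG : ∀ κ x η, G κ x η = η^2 - F κ (2*x))
    (hΦκ : ∀ κ > (0:ℝ), ∀ η, Φκ κ η = κ ^ (-k) * Φ (κ*η))
    (hΦ0 : ∀ η, Φ0 η = C * η ^ k)
    (gκ : ℝ → ℝ → ℝ) (g0 : ℝ → ℝ)
    (hgκ : ∀ κ > (0:ℝ), ∀ x > (0:ℝ), gκ κ x =
      4 * π * Real.exp (4*κ*x) *
        ∫ η in (0:ℝ)..(x - κ * F κ x),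
          Φκ κ η * (1 - κ*η)^2 * (2*(x-η) + κ * G κ x η) ^ ((1:ℝ)/2))
    (hgκ0 : ∀ κ > (0:ℝ), ∀ x ≤ (0:ℝ), gκ κ x = 0)
    (hg0 : ∀ x > (0:ℝ), g0 x =
      4 * π * Real.sqrt 2 * ∫ η in (0:ℝ)..x, Φ0 η * (x - η) ^ ((1:ℝ)/2))
    (hg00 : ∀ x ≤ (0:ℝ), g0 x = 0) :
    ∃ C₂ > (0:ℝ), ∃ κ₀ > (0:ℝ), κ₀ ≤ 1 ∧
      ∀ κ, 0 < κ → κ ≤ κ₀ → ∀ x ≤ (1:ℝ), |gκ κ x - g0 x| ≤ C₂ * κ ^ δ := by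
  refine ⟨1792 * π * (C + C'), by positivity, 1, one_pos, le_refl 1, ?_⟩
  intro κ hκ hκ1 x hx1
  have hκδpos : (0:ℝ) < κ ^ δ := Real.rpow_pos_of_pos hκ δ
  rcases le_or_gt x 0 with hx | hx
  · rw [hgκ0 κ hκ x hx, hg00 x hx, sub_zero, abs_zero]
    positivity
  -- main case : 0 < x ≤ 1
  have hκx1 : κ * x ≤ 1 := by nlinarith
  have hκδ1 : κ ^ δ ≤ 1 := Real.rpow_le_one hκ.le hκ1 hδ0.le
  have hκκδ : κ ≤ κ ^ δ := by
    have := Real.rpow_le_rpow_of_exponent_ge hκ hκ1 (by linarith : δ ≤ (1:ℝ))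
    rwa [Real.rpow_one] at this
  have hhalf : κ ^ ((1:ℝ)/2) ≤ κ ^ δ :=
    Real.rpow_le_rpow_of_exponent_ge hκ hκ1 (by linarith)
  -- facts about F
  have hx2 : x^2 ≤ 1 := by nlinarith
  have hF0 : 0 ≤ F κ x := by
    rw [hF κ hκ]
    exact div_nonneg (aux_exp_nn (κ*x)) (by positivity)
  have hFub : F κ x ≤ x ^ 2 := by
    rw [hF κ hκ, div_le_iff₀ (by positivity)]
    calc Real.exp (-(κ*x)) - 1 + κ*x ≤ (κ*x)^2 :=
          aux_exp_quad (κ*x) (by positivity)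
      _ = x^2 * κ^2 := by ring
  have hF2x0 : 0 ≤ F κ (2*x) := by
    rw [hF κ hκ]
    exact div_nonneg (aux_exp_nn (κ*(2*x))) (by positivity)
  have hF2xub : F κ (2*x) ≤ 4 := by
    rw [hF κ hκ, div_le_iff₀ (by positivity)]
    calc Real.exp (-(κ*(2*x))) - 1 + κ*(2*x) ≤ (κ*(2*x))^2 :=
          aux_exp_quad _ (by positivity)
      _ ≤ 4 * κ^2 := by nlinarith [sq_nonneg κ]
  set b : ℝ := x - κ * F κ x with hbdef
  have hb0 : 0 ≤ b := by
    have : κ * F κ x ≤ κ * x^2 := by nlinarith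
    have : κ * x^2 ≤ x := by nlinarith
    simp only [hbdef]; nlinarith [mul_nonneg hκ.le hF0]
  have hbx : b ≤ x := by
    simp only [hbdef]; nlinarith [mul_nonneg hκ.le hF0]
  have hb1 : b ≤ 1 := le_trans hbx hx1
  -- the two integrands
  set Fk : ℝ → ℝ := fun η => Φκ κ η * (1 - κ*η)^2 *
      Real.sqrt (2*(x-η) + κ * G κ x η) with hFkdef
  set F0 : ℝ → ℝ := fun η => C * η ^ k * Real.sqrt (2*(x-η)) with hF0def
  -- pointwise bound on Φκ
  have hΦκbound : ∀ η ∈ Set.Ioc (0:ℝ) b, |Φκ κ η - C * η ^ k| ≤ C' * κ ^ δ := by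
    intro η hη
    obtain ⟨hη0, hηb⟩ := hη
    have hη1 : η ≤ 1 := le_trans hηb hb1
    have hκη : κ * η ∈ Set.Icc (0:ℝ) 1 := ⟨by positivity, by nlinarith⟩
    have hkpos : (0:ℝ) < κ ^ (-k) := Real.rpow_pos_of_pos hκ _
    have hcancel : κ ^ (-k) * κ ^ k = 1 := by
      rw [← Real.rpow_add hκ]; simp
    have e1 : κ ^ (-k) * (C * (κ*η) ^ k) = C * η ^ k := by
      rw [Real.mul_rpow hκ.le hη0.le]
      calc κ ^ (-k) * (C * (κ^k * η^k)) = C * (κ^(-k) * κ^k) * η^k := by ring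
        _ = C * η ^ k := by rw [hcancel]; ring
    have e2 : κ ^ (-k) * (C' * (κ*η) ^ (k+δ)) = C' * κ^δ * η^(k+δ) := by
      rw [Real.mul_rpow hκ.le hη0.le, Real.rpow_add hκ]
      calc κ^(-k) * (C' * (κ^k*κ^δ * η^(k+δ))) = C' * (κ^(-k) * κ^k) * κ^δ * η^(k+δ) := by ring
        _ = C' * κ^δ * η^(k+δ) := by rw [hcancel]; ring
    have htay := hΦtaylor (κ*η) hκη
    have eq3 : Φκ κ η - C * η^k = κ^(-k) * (Φ (κ*η) - C*(κ*η)^k) := by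
      rw [hΦκ κ hκ, mul_sub, e1]
    rw [eq3, abs_mul, abs_of_pos hkpos]
    calc κ^(-k) * |Φ (κ*η) - C*(κ*η)^k| ≤ κ^(-k) * (C' * (κ*η)^(k+δ)) :=
          mul_le_mul_of_nonneg_left htay hkpos.le
      _ = C' * κ^δ * η^(k+δ) := e2
      _ ≤ C' * κ^δ * 1 := by
          have h9 : η^(k+δ) ≤ 1 := Real.rpow_le_one hη0.le hη1 (by linarith)
          exact mul_le_mul_of_nonneg_left h9 (by positivity)
      _ = C' * κ^δ := by ring
  have hΦκnn : ∀ η, 0 ≤ Φκ κ η := fun η => by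
    rw [hΦκ κ hκ]
    exact mul_nonneg (Real.rpow_nonneg hκ.le _) (hΦnn _)
  have hΦκub : ∀ η ∈ Set.Ioc (0:ℝ) b, Φκ κ η ≤ C + C' := by
    intro η hη
    have h1 := abs_le.mp (hΦκbound η hη)
    have hη1 : η ≤ 1 := le_trans hη.2 hb1
    have hηk : η ^ k ≤ 1 := Real.rpow_le_one hη.1.le hη1 hk0.le
    have p1 : C * η ^ k ≤ C * 1 := mul_le_mul_of_nonneg_left hηk hC.le
    have p2 : C' * κ ^ δ ≤ C' * 1 := mul_le_mul_of_nonneg_left hκδ1 hC'.le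
    linarith [h1.2]
  -- facts about the sqrt argument
  have hAub : ∀ η ∈ Set.Ioc (0:ℝ) b, 2*(x-η) + κ * G κ x η ≤ 4 := by
    intro η hη
    rw [hG]
    have hη1 : η ≤ 1 := le_trans hη.2 hb1
    nlinarith [hη.1, mul_nonneg hκ.le hF2x0]
  have hsqrt4 : Real.sqrt 4 = 2 := by
    rw [show (4:ℝ) = 2^2 by norm_num, Real.sqrt_sq (by norm_num : (0:ℝ) ≤ 2)]
  have hsqrtA2 : ∀ η ∈ Set.Ioc (0:ℝ) b, Real.sqrt (2*(x-η) + κ * G κ x η) ≤ 2 := by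
    intro η hη
    calc Real.sqrt (2*(x-η) + κ * G κ x η) ≤ Real.sqrt 4 := Real.sqrt_le_sqrt (hAub η hη)
      _ = 2 := hsqrt4
  have hsqrtdiff : ∀ η ∈ Set.Ioc (0:ℝ) b,
      |Real.sqrt (2*(x-η) + κ * G κ x η) - Real.sqrt (2*(x-η))| ≤ 2 * κ ^ δ := by
    intro η hη
    have hη1 : η ≤ 1 := le_trans hη.2 hb1
    have hGb : |G κ x η| ≤ 4 := by
      rw [hG, abs_le]
      constructor <;> nlinarith [hη.1]
    have hAdiff : |(2*(x-η) + κ * G κ x η) - 2*(x-η)| ≤ 4*κ := by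
      rw [show (2*(x-η) + κ * G κ x η) - 2*(x-η) = κ * G κ x η by ring, abs_mul,
        abs_of_pos hκ]
      nlinarith
    calc |Real.sqrt (2*(x-η) + κ * G κ x η) - Real.sqrt (2*(x-η))|
        ≤ Real.sqrt |(2*(x-η) + κ * G κ x η) - 2*(x-η)| := aux_sqrt_diff _ _
      _ ≤ Real.sqrt (4*κ) := Real.sqrt_le_sqrt hAdiff
      _ = 2 * Real.sqrt κ := by rw [Real.sqrt_mul (by norm_num : (0:ℝ) ≤ 4), hsqrt4]
      _ = 2 * κ ^ ((1:ℝ)/2) := by rw [Real.sqrt_eq_rpow]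
      _ ≤ 2 * κ ^ δ := by linarith
  -- pointwise difference bound
  have hptdiff : ∀ η ∈ Set.Ioc (0:ℝ) b, |Fk η - F0 η| ≤ (6*(C+C')) * κ ^ δ := by
    intro η hη
    have hη1 : η ≤ 1 := le_trans hη.2 hb1
    have hηk1 : η ^ k ≤ 1 := Real.rpow_le_one hη.1.le hη1 hk0.le
    have hηknn : (0:ℝ) ≤ η ^ k := Real.rpow_nonneg hη.1.le _
    have hκη1 : κ * η ≤ 1 := by nlinarith
    have hκηnn : 0 ≤ κ * η := mul_nonneg hκ.le hη.1.le
    have hsq1 : (1-κ*η)^2 ≤ 1 := by nlinarith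
    have hsqnn : (0:ℝ) ≤ (1-κ*η)^2 := sq_nonneg _
    have hfront : |Φκ κ η * (1-κ*η)^2 - C * η^k| ≤ (C' + 2*C) * κ^δ := by
      have expand : Φκ κ η * (1-κ*η)^2 - C*η^k
          = (Φκ κ η - C*η^k) * (1-κ*η)^2 + C*η^k*((1-κ*η)^2 - 1) := by ring
      have t1 : |(Φκ κ η - C*η^k) * (1-κ*η)^2| ≤ C' * κ^δ := by
        rw [abs_mul, abs_of_nonneg hsqnn]
        nlinarith [hΦκbound η hη, abs_nonneg (Φκ κ η - C*η^k)]
      have t2 : |C*η^k*((1-κ*η)^2 - 1)| ≤ 2*C*κ^δ := by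
        rw [abs_mul]
        have hb2 : |(1-κ*η)^2 - 1| ≤ 2*κ := by
          rw [abs_le]
          constructor <;> nlinarith [mul_nonneg hκ.le hη.1.le]
        have hCη : |C * η^k| ≤ C := by
          rw [abs_of_nonneg (by positivity)]; nlinarith
        calc |C*η^k| * |(1-κ*η)^2-1| ≤ C * (2*κ) :=
              mul_le_mul hCη hb2 (abs_nonneg _) hC.le
          _ ≤ 2*C*κ^δ := by nlinarith
      calc |Φκ κ η * (1-κ*η)^2 - C*η^k|
          = |(Φκ κ η - C*η^k) * (1-κ*η)^2 + C*η^k*((1-κ*η)^2 - 1)| := by rw [expand]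
        _ ≤ |(Φκ κ η - C*η^k) * (1-κ*η)^2| + |C*η^k*((1-κ*η)^2 - 1)| := abs_add_le _ _
        _ ≤ C'*κ^δ + 2*C*κ^δ := add_le_add t1 t2
        _ = (C'+2*C)*κ^δ := by ring
    have hdecomp : Fk η - F0 η
        = (Φκ κ η * (1-κ*η)^2 - C*η^k) * Real.sqrt (2*(x-η) + κ * G κ x η)
          + C*η^k * (Real.sqrt (2*(x-η) + κ * G κ x η) - Real.sqrt (2*(x-η))) := by
      simp only [hFkdef, hF0def]; ring
    rw [hdecomp]
    have s1 : |(Φκ κ η * (1-κ*η)^2 - C*η^k) * Real.sqrt (2*(x-η) + κ * G κ x η)|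
        ≤ (C' + 2*C) * κ^δ * 2 := by
      rw [abs_mul, abs_of_nonneg (Real.sqrt_nonneg _)]
      exact mul_le_mul hfront (hsqrtA2 η hη) (Real.sqrt_nonneg _) (by positivity)
    have s2 : |C*η^k * (Real.sqrt (2*(x-η) + κ * G κ x η) - Real.sqrt (2*(x-η)))|
        ≤ C * (2 * κ^δ) := by
      rw [abs_mul]
      have hCη : |C * η^k| ≤ C := by
        rw [abs_of_nonneg (by positivity)]; nlinarith
      exact mul_le_mul hCη (hsqrtdiff η hη) (abs_nonneg _) hC.le
    calc |_ + _| ≤ _ := abs_add_le _ _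
      _ ≤ (C' + 2*C) * κ^δ * 2 + C * (2 * κ^δ) := add_le_add s1 s2
      _ ≤ (6*(C+C')) * κ^δ := by nlinarith
  -- absolute bound on Fk
  have hFkabs : ∀ η ∈ Set.Ioc (0:ℝ) b, |Fk η| ≤ 2*(C+C') := by
    intro η hη
    have hκη1 : κ * η ≤ 1 := by nlinarith [hη.1, hη.2, hb1]
    have hsq1 : (1-κ*η)^2 ≤ 1 := by nlinarith [mul_nonneg hκ.le hη.1.le]
    have h1 := hΦκnn η
    have h2 := hΦκub η hη
    have h3 := hsqrtA2 η hη
    have h4 := Real.sqrt_nonneg (2*(x-η) + κ * G κ x η)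
    have habs : |Fk η| = Fk η := abs_of_nonneg (by
      simp only [hFkdef]
      positivity)
    rw [habs]
    simp only [hFkdef]
    calc Φκ κ η * (1-κ*η)^2 * Real.sqrt (2*(x-η) + κ * G κ x η)
        ≤ (C+C') * 1 * 2 := by
          apply mul_le_mul _ h3 h4 (by positivity)
          exact mul_le_mul h2 hsq1 (sq_nonneg _) (by positivity)
      _ = 2*(C+C') := by ring
  -- integrability
  have hFkmeas : Measurable Fk := by
    have hm1 : Measurable (fun η => Φκ κ η) := by
      have : (fun η => Φκ κ η) = fun η => κ^(-k) * Φ (κ*η) := funext (hΦκ κ hκ)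
      rw [this]
      exact (hΦmeas.comp (measurable_const_mul κ)).const_mul _
    have hm2 : Measurable (fun η : ℝ => (1 - κ*η)^2) :=
      (measurable_const.sub (measurable_id.const_mul κ)).pow_const 2
    have hm3 : Measurable (fun η : ℝ => Real.sqrt (2*(x-η) + κ * G κ x η)) := by
      apply Real.continuous_sqrt.measurable.comp
      apply Measurable.add
      · exact (measurable_const.sub measurable_id).const_mul 2
      · apply Measurable.const_mul
        have hGeq : G κ x = fun η => η^2 - F κ (2*x) := funext (hG κ x)
        have hGm : Measurable (G κ x) := by
          rw [hGeq]; exact (measurable_id.pow_const 2).sub measurable_const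
        exact hGm
    exact (hm1.mul hm2).mul hm3
  have hFkint : IntervalIntegrable Fk volume 0 b := by
    rw [intervalIntegrable_iff_integrableOn_Ioc_of_le hb0]
    apply MeasureTheory.Integrable.mono'
      (g := fun _ => 2*(C+C')) ((integrableOn_const_iff).mpr (Or.inr measure_Ioc_lt_top))
      (hFkmeas.aestronglyMeasurable.restrict)
    rw [ae_restrict_iff' measurableSet_Ioc]
    exact ae_of_all _ fun η hη => by rw [Real.norm_eq_abs]; exact hFkabs η hη
  have hcontF0 : ContinuousOn F0 (Set.uIcc 0 x) := by
    apply ContinuousOn.mul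
    · exact ContinuousOn.mul continuousOn_const
        (ContinuousOn.rpow_const continuousOn_id (fun η _ => Or.inr hk0.le))
    · exact (Real.continuous_sqrt.comp (continuous_const.mul (continuous_const.sub continuous_id))).continuousOn
  have hF0int : IntervalIntegrable F0 volume 0 x := hcontF0.intervalIntegrable
  have hsub1 : Set.uIcc (0:ℝ) b ⊆ Set.uIcc 0 x := by
    rw [Set.uIcc_of_le hb0, Set.uIcc_of_le hx.le]
    exact Set.Icc_subset_Icc le_rfl hbx
  have hsub2 : Set.uIcc b x ⊆ Set.uIcc (0:ℝ) x := by
    rw [Set.uIcc_of_le hbx, Set.uIcc_of_le hx.le]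
    exact Set.Icc_subset_Icc hb0 le_rfl
  have hF0intb : IntervalIntegrable F0 volume 0 b := hF0int.mono_set hsub1
  have hF0intbx : IntervalIntegrable F0 volume b x := hF0int.mono_set hsub2
  -- integral estimates
  set Ik : ℝ := ∫ η in (0:ℝ)..b, Fk η with hIkdef
  set J : ℝ := ∫ η in (0:ℝ)..b, F0 η with hJdef
  set K : ℝ := ∫ η in b..x, F0 η with hKdef
  have hIkb : |Ik| ≤ 2*(C+C') := by
    have h := intervalIntegral.norm_integral_le_of_norm_le_const
      (C := 2*(C+C')) (f := Fk) (a := (0:ℝ)) (b := b)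
      (fun η hη => by
        rw [Real.norm_eq_abs]
        exact hFkabs η (by rwa [Set.uIoc_of_le hb0] at hη))
    rw [Real.norm_eq_abs] at h
    calc |Ik| ≤ 2*(C+C') * |b - 0| := h
      _ ≤ 2*(C+C') * 1 := by
          rw [sub_zero, abs_of_nonneg hb0]
          exact mul_le_mul_of_nonneg_left hb1 (by positivity)
      _ = 2*(C+C') := by ring
  have hmaindiff : |Ik - J| ≤ 6*(C+C') * κ^δ := by
    rw [hIkdef, hJdef, ← intervalIntegral.integral_sub hFkint hF0intb]
    have h := intervalIntegral.norm_integral_le_of_norm_le_const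
      (C := 6*(C+C') * κ^δ) (f := fun η => Fk η - F0 η) (a := (0:ℝ)) (b := b)
      (fun η hη => by
        rw [Real.norm_eq_abs]
        exact hptdiff η (by rwa [Set.uIoc_of_le hb0] at hη))
    rw [Real.norm_eq_abs] at h
    calc |∫ η in (0:ℝ)..b, (Fk η - F0 η)| ≤ 6*(C+C') * κ^δ * |b - 0| := h
      _ ≤ 6*(C+C') * κ^δ * 1 := by
          rw [sub_zero, abs_of_nonneg hb0]
          exact mul_le_mul_of_nonneg_left hb1 (by positivity)
      _ = 6*(C+C') * κ^δ := by ring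
  have htail : |K| ≤ 2*C * κ^δ := by
    have hbd : ∀ η ∈ Set.uIoc b x, ‖F0 η‖ ≤ 2*C := by
      intro η hη
      rw [Set.uIoc_of_le hbx] at hη
      have hη0 : 0 < η := lt_of_le_of_lt hb0 hη.1
      have hη1 : η ≤ 1 := le_trans hη.2 hx1
      have hηk1 : η ^ k ≤ 1 := Real.rpow_le_one hη0.le hη1 hk0.le
      have hs : Real.sqrt (2*(x-η)) ≤ 2 := by
        calc Real.sqrt (2*(x-η)) ≤ Real.sqrt 4 := Real.sqrt_le_sqrt (by nlinarith [hη.1])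
          _ = 2 := hsqrt4
      rw [Real.norm_eq_abs, abs_of_nonneg (by
        simp only [hF0def]
        positivity)]
      simp only [hF0def]
      calc C * η ^ k * Real.sqrt (2*(x-η)) ≤ C * 1 * 2 := by
            apply mul_le_mul _ hs (Real.sqrt_nonneg _) (by positivity)
            exact mul_le_mul_of_nonneg_left hηk1 hC.le
        _ = 2*C := by ring
    have h := intervalIntegral.norm_integral_le_of_norm_le_const hbd
    rw [Real.norm_eq_abs] at h
    calc |K| ≤ 2*C * |x - b| := h
      _ ≤ 2*C * κ := by
          have hxb : x - b = κ * F κ x := by rw [hbdef]; ring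
          have h1 : κ * F κ x ≤ κ := by
            calc κ * F κ x ≤ κ * 1 :=
                  mul_le_mul_of_nonneg_left (le_trans hFub hx2) hκ.le
              _ = κ := mul_one κ
          rw [abs_of_nonneg (by linarith), hxb]
          exact mul_le_mul_of_nonneg_left h1 (by positivity)
      _ ≤ 2*C * κ^δ := mul_le_mul_of_nonneg_left hκκδ (by positivity)
  have hsplitI : (∫ η in (0:ℝ)..x, F0 η) = J + K :=
    (intervalIntegral.integral_add_adjacent_intervals hF0intb hF0intbx).symm
  -- exponential factor
  have hexp : |Real.exp (4*κ*x) - 1| ≤ 220*κ := by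
    have ht0 : (0:ℝ) < 4*κ*x := by positivity
    have ht4 : 4*κ*x ≤ 4 := by linarith [hκx1]
    have he55 : Real.exp 4 ≤ 55 := aux_exp4
    have he4 : Real.exp (4*κ*x) ≤ 55 := le_trans (Real.exp_le_exp.mpr ht4) he55
    have hlow : 1 ≤ Real.exp (4*κ*x) := Real.one_le_exp ht0.le
    have hprod : Real.exp (-(4*κ*x)) * Real.exp (4*κ*x) = 1 := by
      rw [← Real.exp_add]; simp
    have hup : Real.exp (4*κ*x) - 1 ≤ (4*κ*x) * Real.exp (4*κ*x) := by
      have := mul_le_mul_of_nonneg_right (Real.add_one_le_exp (-(4*κ*x)))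
        (Real.exp_pos (4*κ*x)).le
      rw [hprod] at this
      linarith
    rw [abs_of_nonneg (by linarith)]
    calc Real.exp (4*κ*x) - 1 ≤ (4*κ*x) * Real.exp (4*κ*x) := hup
      _ ≤ (4*κ*x) * 55 := mul_le_mul_of_nonneg_left he4 (by positivity)
      _ ≤ 220*κ := by
          have : κ * x ≤ κ * 1 := mul_le_mul_of_nonneg_left hx1 hκ.le
          linarith
  -- rewrite gκ and g0
  have heq : gκ κ x - g0 x
      = 4*π*((Real.exp (4*κ*x) - 1) * Ik + ((Ik - J) - K)) := by
    rw [hgκ κ hκ x hx, hg0 x hx]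
    have hIkeq : (∫ η in (0:ℝ)..b,
        Φκ κ η * (1 - κ*η)^2 * (2*(x-η) + κ * G κ x η) ^ ((1:ℝ)/2)) = Ik := by
      rw [hIkdef]
      apply intervalIntegral.integral_congr
      intro η hη
      simp only [hFkdef]
      rw [Real.sqrt_eq_rpow]
    have hI0eq : (∫ η in (0:ℝ)..x, Φ0 η * (x - η) ^ ((1:ℝ)/2))
        = (∫ η in (0:ℝ)..x, F0 η) / Real.sqrt 2 := by
      rw [eq_div_iff (by positivity : Real.sqrt 2 ≠ 0), ← intervalIntegral.integral_mul_const]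
      apply intervalIntegral.integral_congr
      intro η hη
      simp only [hF0def, hΦ0]
      rw [← Real.sqrt_eq_rpow, Real.sqrt_mul (by norm_num : (0:ℝ) ≤ 2)]
      ring
    rw [hIkeq, hI0eq, hsplitI]
    have h2 : Real.sqrt 2 ≠ 0 := by positivity
    field_simp
    ring
  rw [heq, abs_mul, abs_of_pos (by positivity : (0:ℝ) < 4*π)]
  have habs : |(Real.exp (4*κ*x) - 1) * Ik + ((Ik - J) - K)|
      ≤ |Real.exp (4*κ*x) - 1| * |Ik| + (|Ik - J| + |K|) := by
    calc |(Real.exp (4*κ*x) - 1) * Ik + ((Ik - J) - K)|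
        ≤ |(Real.exp (4*κ*x) - 1) * Ik| + |(Ik - J) - K| := abs_add_le _ _
      _ ≤ |Real.exp (4*κ*x) - 1| * |Ik| + (|Ik - J| + |K|) := by
          rw [abs_mul]
          exact add_le_add le_rfl (abs_sub _ _)
  have hfinal : |Real.exp (4*κ*x) - 1| * |Ik| + (|Ik - J| + |K|)
      ≤ 448*(C+C') * κ^δ := by
    have t1 : |Real.exp (4*κ*x) - 1| * |Ik| ≤ 220*κ * (2*(C+C')) :=
      mul_le_mul hexp hIkb (abs_nonneg _) (by positivity)
    have t2 : 220*κ * (2*(C+C')) ≤ 440*(C+C') * κ^δ := by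
      have h1 : 440*(C+C') * κ ≤ 440*(C+C') * κ^δ :=
        mul_le_mul_of_nonneg_left hκκδ (by positivity)
      linarith
    have t3 : 2*C * κ^δ ≤ 2*(C+C') * κ^δ :=
      mul_le_mul_of_nonneg_right (by linarith) hκδpos.le
    linarith [htail, hmaindiff]
  calc 4*π*|(Real.exp (4*κ*x) - 1) * Ik + ((Ik - J) - K)|
      ≤ 4*π*(448*(C+C') * κ^δ) := by
        apply mul_le_mul_of_nonneg_left (le_trans habs hfinal) (by positivity)
    _ = 1792 * π * (C + C') * κ^δ := by ring
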